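/- Assume in addition that K₀ has degree 2 over ℚ (so K is a quartic field). Let p be a rational prime that is unramified in K. Then the number of nonzero ideals I of O_K with relNorm I = p·O_{K₀} is equal to 0, 2, or 4. -/

import Mathlib

open NumberField

section CombCount
open Multiset
private theorem mem_ne' {α : Type*} {s t : Multiset α} (z : α) (hz : z ∈ t) (hz' : z ∉ s) :
    s ≠ t := fun h => hz' (h ▸ hz)

private theorem notmem_pair {α : Type*} {z a b : α} (h1 : z ≠ a) (h2 : z ≠ b) :
    z ∉ ({a, b} : Multiset α) := by
  simp [h1, h2]

theorem comb_count {α : Type*} (f : α → α) (hf : Function.Involutive f)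
    (M : Multiset α) (hM : M.Nodup) (hM0 : M ≠ 0) (hc4 : Multiset.card M ≤ 4) :
    {s : Multiset α | s + s.map f = M}.ncard = 0 ∨
    {s : Multiset α | s + s.map f = M}.ncard = 2 ∨
    {s : Multiset α | s + s.map f = M}.ncard = 4 := by
  classical
  set T := {s : Multiset α | s + s.map f = M} with hT
  have key : ∀ s ∈ T, ∀ z, z ∈ M → (z ∈ s ∨ f z ∈ s) := by
    intro s hs z hz
    have hmap : count z (s.map f) = count (f z) s := by
      conv_lhs => rw [← hf z]
      exact Multiset.count_map_eq_count' f s hf.injective (f z)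
    have h1 : count z s + count (f z) s = 1 := by
      have := congrArg (count z) hs
      rwa [count_add, hmap, Multiset.count_eq_one_of_mem hM hz] at this
    by_cases h : z ∈ s
    · exact Or.inl h
    · refine Or.inr ?_
      have h0 : count z s = 0 := by rwa [Multiset.count_eq_zero]
      rw [← Multiset.count_pos]
      omega
  have memM : ∀ s ∈ T, s ≤ M := fun s hs => hs ▸ Multiset.le_add_right _ _
  rcases Set.eq_empty_or_nonempty T with h | ⟨s₀, hs₀⟩
  · left; simp [h]
  have hcardM : Multiset.card M = 2 * Multiset.card s₀ := by
    rw [← hs₀]; simp [Multiset.card_add]; ring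
  have cardsol : ∀ s ∈ T, Multiset.card s = Multiset.card s₀ := by
    intro s hs
    have : Multiset.card M = 2 * Multiset.card s := by
      rw [← hs]; simp [Multiset.card_add]; ring
    omega
  have hpos : 0 < Multiset.card M := Multiset.card_pos.mpr hM0
  have h12 : Multiset.card s₀ = 1 ∨ Multiset.card s₀ = 2 := by omega
  rcases h12 with h1 | h2
  · -- two solutions
    obtain ⟨x, rfl⟩ := Multiset.card_eq_one.mp h1
    have hMx : M = {x, f x} := by rw [← hs₀]; rfl
    have hxfx : x ≠ f x := by
      rw [hMx] at hM
      simpa using (Multiset.nodup_cons.mp hM).1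
    have hTeq : T = {({x} : Multiset α), {f x}} := by
      ext s
      simp only [hT, Set.mem_setOf_eq, Set.mem_insert_iff, Set.mem_singleton_iff]
      constructor
      · intro hs
        have hc : Multiset.card s = 1 := cardsol s hs
        obtain ⟨y, rfl⟩ := Multiset.card_eq_one.mp hc
        have hy : y ∈ M := Multiset.mem_of_le (memM _ hs) (Multiset.mem_singleton_self y)
        rw [hMx] at hy
        rcases Multiset.mem_cons.mp hy with h | h
        · left; rw [h]
        · right; rw [Multiset.mem_singleton.mp h]
      · rintro (rfl | rfl)
        · exact hs₀
        · show {f x} + Multiset.map f {f x} = M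
          rw [Multiset.map_singleton, hf x, hMx, Multiset.singleton_add]
          exact Multiset.cons_swap _ _ _
    rw [hTeq, Set.ncard_pair (fun h => hxfx (Multiset.singleton_inj.mp h))]
    right; left; rfl
  · -- four solutions
    obtain ⟨x, y, rfl⟩ := Multiset.card_eq_two.mp h2
    have hMx : M = {x, y, f x, f y} := by rw [← hs₀]; rfl
    have hnd := hM
    rw [hMx] at hnd
    simp only [Multiset.insert_eq_cons, Multiset.nodup_cons, Multiset.mem_cons,
      Multiset.mem_singleton, Multiset.nodup_singleton, and_true, not_or] at hnd
    obtain ⟨⟨hxy, hxfx, hxfy⟩, ⟨hyfx, hyfy⟩, hfxfy⟩ := hnd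
    have sol : ∀ u v : α, u ::ₘ v ::ₘ f u ::ₘ f v ::ₘ 0 = M →
        ({u, v} : Multiset α) ∈ T := by
      intro u v huv
      show ({u, v} : Multiset α) + Multiset.map f {u, v} = M
      rw [← huv]; rfl
    have hTeq : T = {({x, y} : Multiset α), {x, f y}, {f x, y}, {f x, f y}} := by
      ext s
      simp only [hT, Set.mem_setOf_eq, Set.mem_insert_iff, Set.mem_singleton_iff]
      constructor
      · intro hs
        have ha : x ∈ s ∨ f x ∈ s := key s hs x (by rw [hMx]; simp)
        have hb : y ∈ s ∨ f y ∈ s := key s hs y (by rw [hMx]; simp)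
        obtain ⟨a, haeq, has⟩ : ∃ a, (a = x ∨ a = f x) ∧ a ∈ s := by
          rcases ha with h | h
          exacts [⟨x, Or.inl rfl, h⟩, ⟨f x, Or.inr rfl, h⟩]
        obtain ⟨b, hbeq, hbs⟩ : ∃ b, (b = y ∨ b = f y) ∧ b ∈ s := by
          rcases hb with h | h
          exacts [⟨y, Or.inl rfl, h⟩, ⟨f y, Or.inr rfl, h⟩]
        have hab : a ≠ b := by
          rcases haeq with rfl | rfl <;> rcases hbeq with rfl | rfl <;>
            first | exact hxy | exact hxfy | exact (fun h => hyfx h.symm) | exact hfxfy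
        obtain ⟨t, rfl⟩ := Multiset.exists_cons_of_mem has
        have hbt : b ∈ t := by
          rcases Multiset.mem_cons.mp hbs with h | h
          · exact absurd h.symm hab
          · exact h
        obtain ⟨r, rfl⟩ := Multiset.exists_cons_of_mem hbt
        have hr : r = 0 := by
          have hcs := cardsol _ hs
          simp only [Multiset.card_cons] at hcs
          rw [← Multiset.card_eq_zero]
          omega
        subst hr
        rcases haeq with rfl | rfl <;> rcases hbeq with rfl | rfl <;> tauto
      · rintro (rfl | rfl | rfl | rfl)
        · exact hs₀
        · refine sol x (f y) ?_
          rw [hf y, hMx]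
          ext z
          simp only [Multiset.count_cons, Multiset.count_zero, Multiset.count_singleton, Multiset.insert_eq_cons]
          ring
        · refine sol (f x) y ?_
          rw [hf x, hMx]
          ext z
          simp only [Multiset.count_cons, Multiset.count_zero, Multiset.count_singleton, Multiset.insert_eq_cons]
          ring
        · refine sol (f x) (f y) ?_
          rw [hf x, hf y, hMx]
          ext z
          simp only [Multiset.count_cons, Multiset.count_zero, Multiset.count_singleton, Multiset.insert_eq_cons]
          ring
    have neAB : ({x, y} : Multiset α) ≠ {x, f y} :=
      mem_ne' (f y) (by simp) (notmem_pair (fun h => hxfy h.symm) (fun h => hyfy h.symm))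
    have neAC : ({x, y} : Multiset α) ≠ {f x, y} :=
      mem_ne' (f x) (by simp) (notmem_pair (fun h => hxfx h.symm) (fun h => hyfx h.symm))
    have neAD : ({x, y} : Multiset α) ≠ {f x, f y} :=
      mem_ne' (f x) (by simp) (notmem_pair (fun h => hxfx h.symm) (fun h => hyfx h.symm))
    have neBC : ({x, f y} : Multiset α) ≠ {f x, y} :=
      mem_ne' y (by simp) (notmem_pair (fun h => hxy h.symm) (fun h => hyfy h))
    have neBD : ({x, f y} : Multiset α) ≠ {f x, f y} :=
      mem_ne' (f x) (by simp) (notmem_pair (fun h => hxfx h.symm) (fun h => hfxfy h))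
    have neCD : ({f x, y} : Multiset α) ≠ {f x, f y} :=
      mem_ne' (f y) (by simp) (notmem_pair (fun h => hfxfy h.symm) (fun h => hyfy h.symm))
    rw [hTeq]
    right; right
    rw [Set.ncard_insert_of_notMem (by
        simp only [Set.mem_insert_iff, Set.mem_singleton_iff, not_or]
        exact ⟨neAB, neAC, neAD⟩),
      Set.ncard_insert_of_notMem (by
        simp only [Set.mem_insert_iff, Set.mem_singleton_iff, not_or]
        exact ⟨neBC, neBD⟩),
      Set.ncard_pair neCD]

/-- In a Dedekind domain, if `u+v ∈ J` and `u*v ∈ J²` then `u ∈ J`. -/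
theorem mem_of_add_mem_of_mul_mem_sq {R : Type*} [CommRing R] [IsDedekindDomain R]
    {J : Ideal R} (hJ : J ≠ ⊥) {u v : R} (h1 : u + v ∈ J) (h2 : u * v ∈ J ^ 2) :
    u ∈ J := by
  have hus : u ∈ J ⊔ Ideal.span {u} := Ideal.mem_sup_right (Ideal.mem_span_singleton_self u)
  have hu2 : u * u ∈ J * (J ⊔ Ideal.span {u}) := by
    have h3 : (u + v) * u ∈ J * (J ⊔ Ideal.span {u}) := Ideal.mul_mem_mul h1 hus
    have h4 : u * v ∈ J * (J ⊔ Ideal.span {u}) :=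
      Ideal.mul_mono le_rfl le_sup_left (by rwa [← pow_two])
    have huu : u * u = (u + v) * u - u * v := by ring
    rw [huu]
    exact sub_mem h3 h4
  have hCC : (J ⊔ Ideal.span {u}) * (J ⊔ Ideal.span {u}) ≤ J * (J ⊔ Ideal.span {u}) := by
    rw [Ideal.sup_mul]
    refine sup_le le_rfl ?_
    rw [Ideal.mul_sup]
    refine sup_le ?_ ?_
    · rw [mul_comm]; exact Ideal.mul_mono le_rfl le_sup_right
    · rw [Ideal.span_singleton_mul_span_singleton, Ideal.span_singleton_le_iff_mem]
      exact hu2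
  have hC0 : J ⊔ Ideal.span {u} ≠ ⊥ :=
    fun h => hJ (eq_bot_iff.mpr (h ▸ (le_sup_left : J ≤ J ⊔ Ideal.span {u})))
  obtain ⟨D, hD⟩ : J * (J ⊔ Ideal.span {u}) ∣ (J ⊔ Ideal.span {u}) * (J ⊔ Ideal.span {u}) :=
    Ideal.dvd_iff_le.mpr hCC
  have hCD : J ⊔ Ideal.span {u} = J * D :=
    mul_left_cancel₀ hC0 (hD.trans (by ring))
  exact Ideal.le_of_dvd ⟨D, hCD⟩ hus

end CombCount

open UniqueFactorizationMonoid in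
/-- Proposition 4.1(A), ideal-theoretic form: for `K` a quartic field that is a quadratic
extension of a quadratic field `K₀`, and `p` a rational prime unramified in `K`, the number
of nonzero ideals of `O_K` with relative norm `p·O_{K₀}` is 0, 2 or 4. -/
theorem card_ideals_of_relNorm_p_eq_zero_two_or_four
    (K₀ K : Type*) [Field K₀] [Field K] [NumberField K₀] [NumberField K]
    [Algebra K₀ K] (hdeg : Module.finrank K₀ K = 2)
    (hdeg₀ : Module.finrank ℚ K₀ = 2)
    [Module.Finite (𝓞 K₀) (𝓞 K)] [Module.Free (𝓞 K₀) (𝓞 K)]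
    (σ : K ≃ₐ[K₀] K) (hσ : σ ≠ 1)
    (p : ℕ) (hp : p.Prime)
    (hunram : Squarefree (Ideal.span {(p : 𝓞 K)} : Ideal (𝓞 K))) :
    {I : Ideal (𝓞 K) | I ≠ ⊥ ∧ Ideal.relNorm (𝓞 K₀) I = Ideal.span {(p : 𝓞 K₀)}}.ncard = 0 ∨
    {I : Ideal (𝓞 K) | I ≠ ⊥ ∧ Ideal.relNorm (𝓞 K₀) I = Ideal.span {(p : 𝓞 K₀)}}.ncard = 2 ∨
    {I : Ideal (𝓞 K) | I ≠ ⊥ ∧ Ideal.relNorm (𝓞 K₀) I = Ideal.span {(p : 𝓞 K₀)}}.ncard = 4 := by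
  classical
  haveI : IsScalarTower ℚ K₀ K := IsScalarTower.of_algebraMap_eq' (Subsingleton.elim _ _)
  haveI : FiniteDimensional K₀ K := FiniteDimensional.right ℚ K₀ K
  have hcard : Fintype.card (K ≃ₐ[K₀] K) = 2 := by
    have hle : Fintype.card (K ≃ₐ[K₀] K) ≤ 2 := by
      calc Fintype.card (K ≃ₐ[K₀] K) ≤ Fintype.card (K →ₐ[K₀] K) :=
            Fintype.card_le_of_injective _ (algEquivEquivAlgHom K₀ K).injective
        _ ≤ Module.finrank K (K →ₗ[K₀] K) := finrank_algHom K₀ K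
        _ = Module.finrank K₀ K := Module.finrank_linearMap_self K₀ K K
        _ = 2 := hdeg
    have hnt : Nontrivial (K ≃ₐ[K₀] K) := ⟨⟨σ, 1, hσ⟩⟩
    have hge := Fintype.one_lt_card (α := K ≃ₐ[K₀] K)
    omega
  haveI : IsGalois K₀ K := IsGalois.of_card_aut_eq_finrank K₀ K (Nat.card_eq_fintype_card.trans (hcard.trans hdeg.symm))
  have huniv : (Finset.univ : Finset (K ≃ₐ[K₀] K)) = {(1 : K ≃ₐ[K₀] K), σ} := by
    symm
    apply Finset.eq_univ_of_card
    rw [hcard, Finset.card_insert_of_notMem (by simpa using hσ.symm), Finset.card_singleton]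
  have hσσ : σ * σ = 1 := by
    have hm : σ * σ ∈ ({(1 : K ≃ₐ[K₀] K), σ} : Finset (K ≃ₐ[K₀] K)) := huniv ▸ Finset.mem_univ _
    rcases Finset.mem_insert.mp hm with h | h
    · exact h
    · exact absurd (mul_right_cancel (a := σ) (by rw [Finset.mem_singleton.mp h, one_mul])) hσ
  have hnormK : ∀ y : K, algebraMap K₀ K (Algebra.norm K₀ y) = y * σ y := by
    intro y
    rw [Algebra.norm_eq_prod_automorphisms, huniv,
      Finset.prod_insert (by simpa using hσ.symm), Finset.prod_singleton]
    rfl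
  set σB : 𝓞 K ≃ₐ[𝓞 K₀] 𝓞 K := galRestrict (𝓞 K₀) K₀ K (𝓞 K) σ with hσBdef
  have hσB : ∀ x : 𝓞 K, algebraMap (𝓞 K) K (σB x) = σ (algebraMap (𝓞 K) K x) :=
    fun x => algebraMap_galRestrict_apply (𝓞 K₀) σ x
  have hσB2 : ∀ x, σB (σB x) = x := by
    intro x
    calc σB (σB x) = (σB * σB) x := rfl
      _ = (galRestrict (𝓞 K₀) K₀ K (𝓞 K) (σ * σ)) x := by rw [hσBdef, ← map_mul]
      _ = x := by rw [hσσ, map_one]; rfl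
  have normAB : ∀ x : 𝓞 K,
      algebraMap (𝓞 K₀) (𝓞 K) (Algebra.norm (𝓞 K₀) x) = x * σB x := by
    intro x
    haveI := IsIntegralClosure.isLocalization (𝓞 K₀) K₀ K (𝓞 K)
    apply IsFractionRing.injective (𝓞 K) K
    rw [map_mul, hσB, ← IsScalarTower.algebraMap_apply (𝓞 K₀) (𝓞 K) K,
      IsScalarTower.algebraMap_apply (𝓞 K₀) K₀ K,
      ← Algebra.norm_localization (𝓞 K₀) (Sₘ := K) (nonZeroDivisors (𝓞 K₀)) x, hnormK]
  have hinjAB : Function.Injective (algebraMap (𝓞 K₀) (𝓞 K)) := by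
    have h1 : Function.Injective (algebraMap (𝓞 K₀) K) := by
      rw [IsScalarTower.algebraMap_eq (𝓞 K₀) K₀ K]
      exact (algebraMap K₀ K).injective.comp (IsFractionRing.injective _ _)
    rw [IsScalarTower.algebraMap_eq (𝓞 K₀) (𝓞 K) K, RingHom.coe_comp] at h1
    exact Function.Injective.of_comp h1
  -- L2
  have L2 : ∀ I : Ideal (𝓞 K),
      Ideal.map (algebraMap (𝓞 K₀) (𝓞 K)) (Ideal.relNorm (𝓞 K₀) I) = I * Ideal.map σB I := by
    intro I
    rcases eq_or_ne I ⊥ with rfl | hI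
    · simp
    have hJ : Ideal.map (algebraMap (𝓞 K₀) (𝓞 K)) (Ideal.relNorm (𝓞 K₀) I) ≠ ⊥ := by
      rw [Ne, Ideal.map_eq_bot_iff_of_injective hinjAB, Ideal.relNorm_eq_bot_iff]
      exact hI
    have hmem : ∀ z ∈ I, algebraMap (𝓞 K₀) (𝓞 K) (Algebra.norm (𝓞 K₀) z) ∈
        Ideal.map (algebraMap (𝓞 K₀) (𝓞 K)) (Ideal.relNorm (𝓞 K₀) I) := fun z hz =>
      Ideal.mem_map_of_mem _ (Ideal.norm_mem_relNorm _ _ hz)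
    apply le_antisymm
    · rw [Ideal.relNorm_apply, Ideal.map_span, Ideal.span_le]
      rintro z ⟨w, ⟨x, hxI, rfl⟩, rfl⟩
      rw [Algebra.intNorm_eq_norm]
      exact normAB x ▸ Ideal.mul_mem_mul hxI (Ideal.mem_map_of_mem _ hxI)
    · rw [Ideal.mul_le]
      intro r hr s hs
      obtain ⟨y, hyI, rfl⟩ := (Ideal.mem_map_iff_of_surjective σB σB.surjective).mp hs
      apply mem_of_add_mem_of_mul_mem_sq hJ (v := y * σB r)
      · have heq : r * σB y + y * σB r =
            algebraMap (𝓞 K₀) (𝓞 K) (Algebra.norm (𝓞 K₀) (r + y))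
            - algebraMap (𝓞 K₀) (𝓞 K) (Algebra.norm (𝓞 K₀) r)
            - algebraMap (𝓞 K₀) (𝓞 K) (Algebra.norm (𝓞 K₀) y) := by
          rw [normAB, normAB, normAB, map_add]; ring
        rw [heq]
        exact sub_mem (sub_mem (hmem _ (add_mem hr hyI)) (hmem _ hr)) (hmem _ hyI)
      · have heq : (r * σB y) * (y * σB r) =
            algebraMap (𝓞 K₀) (𝓞 K) (Algebra.norm (𝓞 K₀) (r * y)) := by
          rw [normAB, map_mul]; ring
        rw [heq, pow_two, ← Ideal.map_mul]
        refine Ideal.mem_map_of_mem _ ?_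
        rw [← Ideal.spanNorm_eq, ← Ideal.spanNorm_mul]
        exact Ideal.norm_mem_spanNorm _ _ (Ideal.mul_mem_mul hr hyI)
  -- extension of (p)
  have hmap_pA : Ideal.map (algebraMap (𝓞 K₀) (𝓞 K)) (Ideal.span {(p : 𝓞 K₀)}) =
      Ideal.span {(p : 𝓞 K)} := by
    rw [Ideal.map_span, Set.image_singleton, map_natCast]
  have hp0 : (p : K₀) ≠ 0 := Nat.cast_ne_zero.mpr hp.ne_zero
  -- contraction of (p)
  have hcomap : Ideal.comap (algebraMap (𝓞 K₀) (𝓞 K)) (Ideal.span {(p : 𝓞 K)}) =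
      Ideal.span {(p : 𝓞 K₀)} := by
    apply le_antisymm
    · intro a ha
      rw [Ideal.mem_comap, Ideal.mem_span_singleton] at ha
      obtain ⟨b, hb⟩ := ha
      have hbK : algebraMap (𝓞 K) K b
          = algebraMap K₀ K ((algebraMap (𝓞 K₀) K₀ a) / p) := by
        have hpK : (p : K) ≠ 0 := Nat.cast_ne_zero.mpr hp.ne_zero
        apply mul_left_cancel₀ hpK
        calc (p:K) * algebraMap (𝓞 K) K b
            = algebraMap (𝓞 K) K ((p : 𝓞 K) * b) := by rw [map_mul, map_natCast]
          _ = algebraMap (𝓞 K) K (algebraMap (𝓞 K₀) (𝓞 K) a) := by rw [hb]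
          _ = algebraMap (𝓞 K₀) K a := (IsScalarTower.algebraMap_apply _ _ _ _).symm
          _ = algebraMap K₀ K (algebraMap (𝓞 K₀) K₀ a) := IsScalarTower.algebraMap_apply _ _ _ _
          _ = (p:K) * algebraMap K₀ K ((algebraMap (𝓞 K₀) K₀ a) / p) := by
              rw [← map_natCast (algebraMap K₀ K) p, ← map_mul, mul_div_cancel₀ _ hp0]
      have hbint : IsIntegral (𝓞 K₀) ((algebraMap (𝓞 K₀) K₀ a) / (p:K₀)) := by
        have h1 : IsIntegral (𝓞 K₀) b := Algebra.IsIntegral.isIntegral b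
        have h2 : IsIntegral (𝓞 K₀) (algebraMap (𝓞 K) K b) := h1.algebraMap
        rw [hbK] at h2
        exact (isIntegral_algebraMap_iff (algebraMap K₀ K).injective).mp h2
      obtain ⟨a', ha'⟩ := IsIntegrallyClosed.isIntegral_iff.mp hbint
      rw [Ideal.mem_span_singleton]
      refine ⟨a', ?_⟩
      apply IsFractionRing.injective (𝓞 K₀) K₀
      rw [map_mul, ha', map_natCast, mul_div_cancel₀ _ hp0]
    · rw [Ideal.span_le]
      intro z hz
      rw [Set.mem_singleton_iff] at hz
      subst hz
      rw [SetLike.mem_coe, Ideal.mem_comap, map_natCast]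
      exact Ideal.mem_span_singleton_self _
  have hpB0 : (Ideal.span {(p : 𝓞 K)} : Ideal (𝓞 K)) ≠ ⊥ := by
    rw [Ne, Ideal.span_singleton_eq_bot]
    exact_mod_cast hp.ne_zero
  -- L4
  have L4 : ∀ N : Ideal (𝓞 K₀),
      Ideal.map (algebraMap (𝓞 K₀) (𝓞 K)) N = Ideal.span {(p : 𝓞 K)} →
      N = Ideal.span {(p : 𝓞 K₀)} := by
    intro N hN
    have hle : N ≤ Ideal.span {(p : 𝓞 K₀)} := by
      refine le_trans (Ideal.le_comap_map (f := algebraMap (𝓞 K₀) (𝓞 K))) ?_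
      rw [hN, hcomap]
    obtain ⟨N', hN'⟩ : Ideal.span {(p : 𝓞 K₀)} ∣ N := Ideal.dvd_iff_le.mpr hle
    have hmapN' : Ideal.map (algebraMap (𝓞 K₀) (𝓞 K)) N' = ⊤ := by
      apply mul_left_cancel₀ hpB0
      rw [Ideal.mul_top, ← hmap_pA, ← Ideal.map_mul, ← hN', hN, hmap_pA]
    have hint : RingHom.IsIntegral (algebraMap (𝓞 K₀) (𝓞 K)) :=
      fun x => Algebra.IsIntegral.isIntegral x
    have hker : RingHom.ker (algebraMap (𝓞 K₀) (𝓞 K)) ≤ N' := by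
      rw [(RingHom.injective_iff_ker_eq_bot (algebraMap (𝓞 K₀) (𝓞 K))).mp hinjAB]
      exact bot_le
    have hN'top : N' = ⊤ := by
      rw [← Ideal.map_eq_top_iff_of_ker_le (algebraMap (𝓞 K₀) (𝓞 K)) hker hint]
      exact hmapN'
    rw [hN', hN'top, Ideal.mul_top]
  -- the norm of pB
  have hrk : Module.finrank ℤ (𝓞 K) = 4 := by
    rw [NumberField.RingOfIntegers.rank, ← Module.finrank_mul_finrank ℚ K₀ K, hdeg₀, hdeg]
  have habs : Ideal.absNorm (Ideal.span {(p : 𝓞 K)}) = p ^ 4 := by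
    rw [Ideal.absNorm_span_singleton, ← map_natCast (algebraMap ℤ (𝓞 K)) p,
      Algebra.norm_algebraMap_of_basis (Module.Free.chooseBasis ℤ (𝓞 K)),
      ← Module.finrank_eq_card_chooseBasisIndex, hrk]
    rw [Int.natAbs_pow]
    norm_num
  have hpBtop : (Ideal.span {(p : 𝓞 K)} : Ideal (𝓞 K)) ≠ ⊤ := by
    intro h
    rw [h] at habs
    have h1 : Ideal.absNorm (⊤ : Ideal (𝓞 K)) = 1 := by
      rw [← Ideal.one_eq_top]; exact map_one Ideal.absNorm
    have h2 : 1 < p ^ 4 := Nat.one_lt_pow (by norm_num) hp.one_lt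
    omega
  -- multiset of prime factors
  set M := normalizedFactors (Ideal.span {(p : 𝓞 K)} : Ideal (𝓞 K)) with hMdef
  have hMnodup : M.Nodup := (squarefree_iff_nodup_normalizedFactors hpB0).mp hunram
  have hMprod : M.prod = Ideal.span {(p : 𝓞 K)} := by
    have := prod_normalizedFactors hpB0
    rwa [associated_iff_eq] at this
  have hM0 : M ≠ 0 := by
    intro h
    rw [h, Multiset.prod_zero, Ideal.one_eq_top] at hMprod
    exact hpBtop hMprod.symm
  have hMprime : ∀ Q ∈ M, Prime Q := fun Q hQ => prime_of_normalized_factor Q hQ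
  have hMcard : Multiset.card M ≤ 4 := by
    have h1 : ∀ x ∈ M.map Ideal.absNorm, p ≤ x := by
      intro x hx
      obtain ⟨Q, hQ, rfl⟩ := Multiset.mem_map.mp hx
      have hdvd : Ideal.absNorm Q ∣ p ^ 4 := by
        rw [← habs]
        exact map_dvd Ideal.absNorm (dvd_of_mem_normalizedFactors hQ)
      obtain ⟨i, _, hQi⟩ := (Nat.dvd_prime_pow hp).mp hdvd
      have hQ1 : Ideal.absNorm Q ≠ 1 := by
        rw [Ne, Ideal.absNorm_eq_one_iff]
        intro h
        exact (hMprime Q hQ).not_unit (Ideal.isUnit_iff.mpr h)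
      have hi0 : i ≠ 0 := by
        rintro rfl
        rw [pow_zero] at hQi
        exact hQ1 hQi
      rw [hQi]
      exact Nat.le_self_pow hi0 p
    have h2 : p ^ Multiset.card M ≤ (M.map Ideal.absNorm).prod := by
      have := Multiset.pow_card_le_prod (s := M.map Ideal.absNorm) (a := p) h1
      rwa [Multiset.card_map] at this
    have h3 : (M.map Ideal.absNorm).prod = p ^ 4 := by
      rw [← habs, ← hMprod]
      exact (map_multiset_prod Ideal.absNorm M).symm
    rw [h3] at h2
    exact (Nat.pow_le_pow_iff_right hp.one_lt).mp h2
  -- the involution on ideals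
  set F : Ideal (𝓞 K) → Ideal (𝓞 K) := fun I => Ideal.map σB I with hFdef
  have hFinv : Function.Involutive F := by
    intro I
    show Ideal.map σB (Ideal.map σB I) = I
    ext x
    constructor
    · intro hx
      obtain ⟨y, hy, rfl⟩ := (Ideal.mem_map_iff_of_surjective σB σB.surjective).mp hx
      obtain ⟨z, hz, rfl⟩ := (Ideal.mem_map_iff_of_surjective σB σB.surjective).mp hy
      rwa [hσB2]
    · intro hx
      have : x = σB (σB x) := (hσB2 x).symm
      rw [this]
      exact Ideal.mem_map_of_mem _ (Ideal.mem_map_of_mem _ hx)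
  have hFbot : ∀ I : Ideal (𝓞 K), I ≠ ⊥ → F I ≠ ⊥ := by
    intro I hI
    show Ideal.map σB I ≠ ⊥
    rw [Ne, Ideal.map_eq_bot_iff_of_injective σB.injective]
    exact hI
  have hFprime : ∀ Q : Ideal (𝓞 K), Prime Q → Prime (F Q) := by
    intro Q hQ
    haveI h1 : Q.IsPrime := Ideal.isPrime_of_prime hQ
    have h2 : (Ideal.map σB Q).IsPrime := Ideal.map_isPrime_of_equiv σB
    have h3 : F Q ≠ ⊥ := hFbot Q hQ.ne_zero
    exact (Ideal.prime_iff_isPrime h3).mpr h2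
  -- F as a monoid hom
  have hFmul : ∀ I J : Ideal (𝓞 K), F (I * J) = F I * F J := fun I J => Ideal.map_mul σB I J
  have hFprodmap : ∀ s : Multiset (Ideal (𝓞 K)), F s.prod = (s.map F).prod := by
    intro s
    induction s using Multiset.induction_on with
    | empty =>
        simp only [Multiset.prod_zero, Multiset.map_zero]
        show Ideal.map σB 1 = 1
        rw [Ideal.one_eq_top, Ideal.map_top]
    | cons a s ih => rw [Multiset.prod_cons, hFmul, ih, Multiset.map_cons, Multiset.prod_cons]
  -- the set of solutions of the multiplicative equation
  have hST : {I : Ideal (𝓞 K) | I ≠ ⊥ ∧ Ideal.relNorm (𝓞 K₀) I = Ideal.span {(p : 𝓞 K₀)}}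
      = {I : Ideal (𝓞 K) | I * F I = Ideal.span {(p : 𝓞 K)}} := by
    ext I
    simp only [Set.mem_setOf_eq]
    constructor
    · rintro ⟨hI0, hN⟩
      show I * Ideal.map σB I = _
      rw [← L2, hN, hmap_pA]
    · intro h
      have hI0 : I ≠ ⊥ := by
        intro hh
        apply hpB0
        rw [← h, hh]
        simp
      exact ⟨hI0, L4 _ (by rw [L2, h])⟩
  have hmain : {I : Ideal (𝓞 K) | I * F I = Ideal.span {(p : 𝓞 K)}} =
      (fun s : Multiset (Ideal (𝓞 K)) => s.prod) '' {s | s + s.map F = M} := by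
    ext I
    simp only [Set.mem_setOf_eq, Set.mem_image]
    constructor
    · intro hI
      have hI0 : I ≠ ⊥ := by
        intro hh; apply hpB0; rw [← hI, hh]; simp
      have hFI0 : F I ≠ ⊥ := hFbot I hI0
      refine ⟨normalizedFactors I, ?_, associated_iff_eq.mp (prod_normalizedFactors hI0)⟩
      have h1 : Multiset.map F (normalizedFactors I) = normalizedFactors (F I) := by
        have hprimes : ∀ Q ∈ Multiset.map F (normalizedFactors I), Prime Q := by
          intro Q hQ
          obtain ⟨R, hR, rfl⟩ := Multiset.mem_map.mp hQ
          exact hFprime R (prime_of_normalized_factor R hR)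
        rw [← normalizedFactors_prod_of_prime hprimes, ← hFprodmap,
          associated_iff_eq.mp (prod_normalizedFactors hI0)]
      rw [h1, ← normalizedFactors_mul hI0 hFI0, hI]
    · rintro ⟨s, hs, rfl⟩
      have hsM : s ≤ M := hs ▸ Multiset.le_add_right _ _
      rw [hFprodmap, ← Multiset.prod_add, hs, hMprod]
  have hinj : Set.InjOn (fun s : Multiset (Ideal (𝓞 K)) => s.prod)
      {s | s + s.map F = M} := by
    intro s1 h1 s2 h2 heq
    simp only [Set.mem_setOf_eq] at h1 h2
    simp only at heq
    have p1 : ∀ Q ∈ s1, Prime Q := fun Q hQ =>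
      hMprime Q (Multiset.mem_of_le (h1 ▸ Multiset.le_add_right _ _) hQ)
    have p2 : ∀ Q ∈ s2, Prime Q := fun Q hQ =>
      hMprime Q (Multiset.mem_of_le (h2 ▸ Multiset.le_add_right _ _) hQ)
    calc s1 = normalizedFactors s1.prod := (normalizedFactors_prod_of_prime p1).symm
      _ = normalizedFactors s2.prod := by rw [heq]
      _ = s2 := normalizedFactors_prod_of_prime p2
  rw [hST, hmain, Set.ncard_image_of_injOn hinj]
  exact comb_count F hFinv M hMnodup hM0 hMcard
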